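/- arXiv:1603.08559 — 2 statements merged into one kernel-verified Lean document; each statement's English description precedes it below -/
import Mathlib

section
/- Let Ω ⊂ ℝ^d be a bounded domain, δ ∈ (0,1], and let l_{±1},…,l_{±m} ∈ B̄_1 ⊂ ℝ^d satisfy l_{−j} = −l_j and Span{l_j} = ℝ^d. Then there exists a function Ψ_0 ∈ C^∞(ℝ^d) such that Ψ_0 ≥ 1 on Ω, and for every choice of numbers a_j with δ ≤ a_j ≤ δ^{−1} (|j| = 1,…,m) one has Σ_{|j|=1}^m a_j D²_{l_j}Ψ_0 + δ^{−1} Σ_{|j|=1}^m |D_{l_j}Ψ_0| ≤ −2 everywhere in Ω; moreover there exists h_0 > 0 such that for all h ∈ (0,h_0) and all such (a_j), Σ_{|j|=1}^m a_j Δ_{h,l_j}Ψ_0 + δ^{−1} Σ_{|j|=1}^m |δ_{h,l_j}Ψ_0| ≤ −1 everywhere in Ω^h. -/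
open scoped BigOperators NNReal
open MeasureTheory Metric Set

noncomputable section

/-- `ℝ^d` with Euclidean norm. -/
abbrev V (d : ℕ) := EuclideanSpace ℝ (Fin d)

/-- Index set `{±1, …, ±m}`: `inl` are the positive indices, `inr` the negative ones. -/
abbrev SIdx (m : ℕ) := Fin m ⊕ Fin m

/-- The map `k ↦ -k` on the index set `{±1, …, ±m}`. -/
def negIdx {m : ℕ} : SIdx m → SIdx m := Sum.elim Sum.inr Sum.inl

/-- The space of variables `z = (z'_0, z'_{±1..±m}, z''_{±1..±m})`. -/
abbrev Zs (m : ℕ) := ℝ × (SIdx m → ℝ) × (SIdx m → ℝ)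

/-- Euclidean norm of the vector `z' = (t, b) ∈ ℝ^{2m+1}`. -/
def zpnorm {m : ℕ} (t : ℝ) (b : SIdx m → ℝ) : ℝ := Real.sqrt (t ^ 2 + ∑ j, b j ^ 2)

/-- Euclidean norm of `z ∈ ℝ^{4m+1}`. -/
def znormZ {m : ℕ} (z : Zs m) : ℝ :=
  Real.sqrt (z.1 ^ 2 + ∑ j, z.2.1 j ^ 2 + ∑ j, z.2.2 j ^ 2)

/-- First-order finite difference `δ_{h,l}φ(x)`. -/
def fdiff {d : ℕ} (h : ℝ) (l : V d) (φ : V d → ℝ) (x : V d) : ℝ := (φ (x + h • l) - φ x) / h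

/-- Second-order finite difference `Δ_{h,l}φ(x)`. -/
def sdiff {d : ℕ} (h : ℝ) (l : V d) (φ : V d → ℝ) (x : V d) : ℝ :=
  (φ (x + h • l) - 2 * φ x + φ (x - h • l)) / h ^ 2

/-- `Ω^h = {x : dist(x, Ωᶜ) > h}`. -/
def intH {d : ℕ} (Ω : Set (V d)) (h : ℝ) : Set (V d) := {x | h < infDist x Ωᶜ}

/-- `∂_hΩ = Ω̄ \ Ω^h`. -/
def bdryH {d : ℕ} (Ω : Set (V d)) (h : ℝ) : Set (V d) := closure Ω \ intH Ω h

/-- The finite-difference operator `H_h[v](x)`. -/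
def Hop {d m : ℕ} (H : Zs m → V d → ℝ) (l : SIdx m → V d) (h : ℝ) (v : V d → ℝ)
    (x : V d) : ℝ :=
  H (v x, fun j => fdiff h (l j) v x, fun j => sdiff h (l j) v x) x

/-- Assumption A(H) with constants `δ`, `N'`: Lipschitz in `z`, `H(0,·)` bounded, and at points
of differentiability in `z`: `δ ≤ D_{z''_j}H ≤ δ⁻¹`, `|D_{z'_j}H| ≤ N'`, `D_{z'_0}H ≤ 0`. -/
def AssumpA {d m : ℕ} (δ N' : ℝ) (Ω : Set (V d)) (H : Zs m → V d → ℝ) : Prop :=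
  (∀ x ∈ closure Ω, ∃ C : ℝ≥0, LipschitzWith C fun z => H z x) ∧
  (∃ C : ℝ, ∀ x ∈ closure Ω, |H 0 x| ≤ C) ∧
  ∀ (z : Zs m), ∀ x ∈ closure Ω, DifferentiableAt ℝ (fun z => H z x) z →
    (∀ j : SIdx m,
      δ ≤ fderiv ℝ (fun z => H z x) z (0, 0, Pi.single j 1) ∧
      fderiv ℝ (fun z => H z x) z (0, 0, Pi.single j 1) ≤ δ⁻¹ ∧
      |fderiv ℝ (fun z => H z x) z (0, Pi.single j 1, 0)| ≤ N') ∧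
    fderiv ℝ (fun z => H z x) z (1, 0, 0) ≤ 0

/-- `P(z'') = max_{δ/2 ≤ a_k ≤ 2δ⁻¹} Σ_k a_k z''_k`. -/
def Pcut {m : ℕ} (δ : ℝ) (z'' : SIdx m → ℝ) : ℝ :=
  ⨆ a : {a : SIdx m → ℝ // ∀ k, δ / 2 ≤ a k ∧ a k ≤ 2 * δ⁻¹},
    ∑ k, (a : SIdx m → ℝ) k * z'' k

/-- The cut-off operator `H_K(z,x) = max(H(z,x), P(z'') - K)`. -/
def HKcut {d m : ℕ} (δ K : ℝ) (H : Zs m → V d → ℝ) (z : Zs m) (x : V d) : ℝ :=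
  max (H z x) (Pcut δ z.2.2 - K)

/-- Exterior ball condition with radius `ρ`. -/
def ExtBall {d : ℕ} (Ω : Set (V d)) (ρ : ℝ) : Prop :=
  ∀ x₀ ∈ frontier Ω, ∃ y, y ∉ Ω ∧ closedBall y ρ ∩ closure Ω = {x₀}

/-- Directional derivative `D_l φ`. -/
def dirD {d : ℕ} (l : V d) (φ : V d → ℝ) (x : V d) : ℝ := fderiv ℝ φ x l

/-- Second directional derivative `D²_l φ = D_l (D_l φ)`. -/
def dirD2 {d : ℕ} (l : V d) (φ : V d → ℝ) (x : V d) : ℝ := dirD l (dirD l φ) x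

/-- The space of `d×d` matrices with Euclidean (Frobenius) norm. -/
abbrev Mat (d : ℕ) := EuclideanSpace ℝ (Fin d × Fin d)

/-- View a function `Fin d × Fin d → ℝ` as an element of `Mat d`. -/
def toMat {d : ℕ} (f : Fin d × Fin d → ℝ) : Mat d := WithLp.toLp 2 f

/-- View a function `Fin n → ℝ` as an element of `EuclideanSpace ℝ (Fin n)`. -/
def toE {n : ℕ} (f : Fin n → ℝ) : EuclideanSpace ℝ (Fin n) := WithLp.toLp 2 f

/-- The quadratic form `⟨a ξ, ξ⟩ = Σ_{i,j} a_{ij} ξ_i ξ_j`. -/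
def quadF {d : ℕ} (a : Mat d) (ξ : Fin d → ℝ) : ℝ := ∑ i, ∑ j, a (i, j) * ξ i * ξ j

/-- `S_δ`: the symmetric matrices with `δ|ξ|² ≤ ⟨aξ,ξ⟩ ≤ δ⁻¹|ξ|²`. -/
def SdeltaSet (d : ℕ) (δ : ℝ) : Set (Mat d) :=
  {a | (∀ i j, a (i, j) = a (j, i)) ∧
    ∀ ξ : Fin d → ℝ, δ * ∑ i, ξ i ^ 2 ≤ quadF a ξ ∧ quadF a ξ ≤ δ⁻¹ * ∑ i, ξ i ^ 2}

/-- `P(u'') = max_{δ̂/2 ≤ a_k ≤ 2δ̂⁻¹} Σ_k a_k ⟨u'' l_k, l_k⟩`. -/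
def PMat {d m : ℕ} (δh : ℝ) (l : SIdx m → V d) (w : Mat d) : ℝ :=
  ⨆ a : {a : SIdx m → ℝ // ∀ k, δh / 2 ≤ a k ∧ a k ≤ 2 * δh⁻¹},
    ∑ k, (a : SIdx m → ℝ) k * quadF w (fun i => l k i)

/-- The vector `u' = (u'_0, u'_1, …, u'_d) ∈ ℝ^{d+1}` built from `t ∈ ℝ` and `p ∈ ℝ^d`. -/
def primeVec {d : ℕ} (t : ℝ) (p : Fin d → ℝ) : EuclideanSpace ℝ (Fin (d + 1)) :=
  toE (Fin.cons t p)

/-- Update the coordinate `i` of a vector in `ℝ^n`. -/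
def updE {n : ℕ} (u : EuclideanSpace ℝ (Fin n)) (i : Fin n) (t : ℝ) :
    EuclideanSpace ℝ (Fin n) := toE (Function.update (fun j => u j) i t)

/-- The gradient `Dv(x)` of `v : ℝ^d → ℝ` as a vector in `ℝ^d`. -/
def gradV {d : ℕ} (v : V d → ℝ) (x : V d) : Fin d → ℝ :=
  fun i => fderiv ℝ v x (EuclideanSpace.single i 1)

/-- Entry `(i,j)` of the Hessian `D²v(x)`. -/
def hessE {d : ℕ} (v : V d → ℝ) (x : V d) (i j : Fin d) : ℝ :=
  fderiv ℝ (fun y => fderiv ℝ v y (EuclideanSpace.single j 1)) x (EuclideanSpace.single i 1)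

/-- The Hessian `D²v(x)` as an element of `Mat d`. -/
def hessM {d : ℕ} (v : V d → ℝ) (x : V d) : Mat d := toMat fun p => hessE v x p.1 p.2

open scoped RealInnerProductSpace

set_option maxHeartbeats 1000000

lemma key_sq (s : ℝ) : s^2 ≤ Real.exp s - 2 + Real.exp (-s) := by
  have main : ∀ t : ℝ, 0 ≤ t → t^2 ≤ Real.exp t - 2 + Real.exp (-t) := by
    intro t ht
    have hs : t/2 ≤ Real.sinh (t/2) := Real.self_le_sinh_iff.mpr (by linarith)
    rw [Real.sinh_eq] at hs
    have ha : Real.exp (t/2) * Real.exp (t/2) = Real.exp t := by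
      rw [← Real.exp_add]; ring_nf
    have hb : Real.exp (-(t/2)) * Real.exp (-(t/2)) = Real.exp (-t) := by
      rw [← Real.exp_add]; ring_nf
    have hab : Real.exp (t/2) * Real.exp (-(t/2)) = 1 := by
      rw [← Real.exp_add]; simp
    nlinarith [hs, ha, hb, hab, Real.exp_pos (t/2), Real.exp_pos (-(t/2))]
  rcases le_or_gt 0 s with h | h
  · exact main s h
  · have := main (-s) (by linarith)
    rw [neg_neg] at this; nlinarith [this]

lemma key_abs (s : ℝ) : |Real.exp s - 1| ≤ |s| * Real.exp |s| := by
  rcases le_or_gt 0 s with h | h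
  · rw [abs_of_nonneg h, abs_of_nonneg (by nlinarith [Real.add_one_le_exp s] : (0:ℝ) ≤ Real.exp s - 1)]
    have h1 : 1 - s ≤ Real.exp (-s) := by nlinarith [Real.add_one_le_exp (-s)]
    nlinarith [Real.exp_pos s, mul_le_mul_of_nonneg_left h1 (Real.exp_pos s).le,
      (Real.exp_add s (-s)) ▸ (by simp : Real.exp (s + -s) = 1)]
  · rw [abs_of_neg h, abs_of_nonpos (by nlinarith [Real.exp_lt_one_iff.mpr h] : Real.exp s - 1 ≤ 0)]
    have h1 : 1 - Real.exp s ≤ -s := by nlinarith [Real.add_one_le_exp s]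
    have h2 : (1:ℝ) ≤ Real.exp (-s) := Real.one_le_exp_iff.mpr (by linarith)
    nlinarith

/-- **Lemma 2.2.** There is `Ψ₀ ∈ C^∞(ℝ^d)`, `Ψ₀ ≥ 1` on `Ω`, with
`Σ a_j D²_{l_j}Ψ₀ + δ⁻¹ Σ |D_{l_j}Ψ₀| ≤ -2` in `Ω` for all `δ ≤ a_j ≤ δ⁻¹`, and for all
sufficiently small `h`, `Σ a_j Δ_{h,l_j}Ψ₀ + δ⁻¹ Σ |δ_{h,l_j}Ψ₀| ≤ -1` in `Ω^h`. -/
theorem stmt_4 (d m : ℕ) (hd : 1 ≤ d) (hm : 1 ≤ m) (δ : ℝ) (hδ : δ ∈ Set.Ioc (0:ℝ) 1)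
    (Ω : Set (V d)) (hΩo : IsOpen Ω) (hΩb : Bornology.IsBounded Ω) (hΩne : Ω.Nonempty)
    (l : SIdx m → V d) (hl1 : ∀ k, ‖l k‖ ≤ 1) (hlneg : ∀ k, l (negIdx k) = -l k)
    (hspan : Submodule.span ℝ (Set.range l) = ⊤) :
    ∃ Ψ : V d → ℝ, ContDiff ℝ (⊤ : ℕ∞) Ψ ∧ (∀ x ∈ Ω, 1 ≤ Ψ x) ∧
      (∀ a : SIdx m → ℝ, (∀ j, δ ≤ a j ∧ a j ≤ δ⁻¹) → ∀ x ∈ Ω,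
        ∑ j, a j * dirD2 (l j) Ψ x + δ⁻¹ * ∑ j, |dirD (l j) Ψ x| ≤ -2) ∧
      ∃ h₀ > (0:ℝ), ∀ h ∈ Set.Ioo (0:ℝ) h₀, ∀ a : SIdx m → ℝ,
        (∀ j, δ ≤ a j ∧ a j ≤ δ⁻¹) → ∀ x ∈ intH Ω h,
          ∑ j, a j * sdiff h (l j) Ψ x + δ⁻¹ * ∑ j, |fdiff h (l j) Ψ x| ≤ -1 := by
  obtain ⟨hδ0, hδ1⟩ := hδ
  have hδi0 : 0 < δ⁻¹ := inv_pos.mpr hδ0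
  -- a nonzero direction
  obtain ⟨j₀, hj₀⟩ : ∃ j, l j ≠ 0 := by
    by_contra hc; push_neg at hc
    have hbot : Submodule.span ℝ (Set.range l) = ⊥ := by
      rw [Submodule.span_eq_bot]; rintro x ⟨j, rfl⟩; exact hc j
    haveI : Nonempty (Fin d) := ⟨⟨0, hd⟩⟩
    exact bot_ne_top (hbot.symm.trans hspan)
  obtain ⟨e, he⟩ : ∃ e : V d, e = l j₀ := ⟨_, rfl⟩
  have hene : e ≠ 0 := he ▸ hj₀
  have hee : 0 < ⟪e, e⟫ := by
    rw [real_inner_self_eq_norm_sq]; exact pow_pos (norm_pos_iff.mpr hene) 2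
  obtain ⟨κ, hκdef⟩ : ∃ κ : ℝ, κ = ∑ j, ⟪e, l j⟫^2 := ⟨_, rfl⟩
  have hκ : 0 < κ := by
    rw [hκdef]
    calc (0:ℝ) < ⟪e, e⟫^2 := pow_pos hee 2
      _ = ⟪e, l j₀⟫^2 := by rw [← he]
      _ ≤ ∑ j, ⟪e, l j⟫^2 := Finset.single_le_sum (f := fun j => ⟪e, l j⟫^2)
          (fun j _ => sq_nonneg _) (Finset.mem_univ j₀)
  have hlam : ∀ j, |⟪e, l j⟫| ≤ 1 := by
    intro j
    refine (abs_real_inner_le_norm e (l j)).trans ?_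
    have h1 : ‖e‖ ≤ 1 := he ▸ hl1 j₀
    nlinarith [hl1 j, norm_nonneg (l j), norm_nonneg e]
  obtain ⟨R, hR0, hR⟩ : ∃ R : ℝ, 0 ≤ R ∧ ∀ x ∈ Ω, ‖x‖ ≤ R := by
    obtain ⟨r, hr⟩ := hΩb.subset_closedBall 0
    exact ⟨max r 0, le_max_right _ _, fun x hx => by
      have := hr hx; rw [mem_closedBall, dist_zero_right] at this
      exact this.trans (le_max_left _ _)⟩
  obtain ⟨μ, hμdef⟩ : ∃ μ : ℝ, μ = (4*(m:ℝ)*δ⁻¹ + 1)/(δ*κ) + 1 := ⟨_, rfl⟩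
  have hμ1 : 1 ≤ μ := by
    rw [hμdef]
    have : 0 ≤ (4*(m:ℝ)*δ⁻¹ + 1)/(δ*κ) := by positivity
    linarith
  have hμ0 : 0 < μ := lt_of_lt_of_le one_pos hμ1
  have hμκ : 4*(m:ℝ)*δ⁻¹ + 1 + δ*κ = δ*μ*κ := by
    have hδκ : δ*κ ≠ 0 := by positivity
    rw [hμdef]; field_simp
  obtain ⟨A, hA⟩ : ∃ A : ℝ, A = 2*Real.exp (μ*R) := ⟨_, rfl⟩
  have hA0 : 0 < A := by rw [hA]; positivity
  obtain ⟨N, hN⟩ : ∃ N : ℝ, N = 1 + A*Real.exp (μ*R) := ⟨_, rfl⟩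
  obtain ⟨g, hgdef⟩ : ∃ g : V d → ℝ, g = fun x => Real.exp (μ * ⟪e, x⟫) := ⟨_, rfl⟩
  have hg0 : ∀ x, 0 < g x := fun x => by rw [hgdef]; exact Real.exp_pos _
  have hgΩ : ∀ x ∈ Ω, 2 ≤ A * g x ∧ g x ≤ Real.exp (μ*R) := by
    intro x hx
    have h1 : |⟪e, x⟫| ≤ R := by
      refine (abs_real_inner_le_norm e x).trans ?_
      have h2 : ‖e‖ ≤ 1 := he ▸ hl1 j₀
      nlinarith [hR x hx, norm_nonneg x, norm_nonneg e]
    rw [abs_le] at h1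
    constructor
    · have h3 : Real.exp (-(μ*R)) ≤ g x := by
        rw [hgdef]
        apply Real.exp_le_exp.mpr
        nlinarith [h1.1, hμ0]
      have h2 : A * Real.exp (-(μ*R)) = 2 := by
        rw [hA, mul_assoc, ← Real.exp_add]; simp
      nlinarith [h3, hA0]
    · rw [hgdef]
      apply Real.exp_le_exp.mpr
      nlinarith [h1.2, hμ0]
  have hfd : ∀ x, HasFDerivAt g ((g x * μ) • (innerSL ℝ e)) x := by
    intro x
    rw [hgdef]
    have h1 : HasFDerivAt (fun y : V d => μ * ⟪e, y⟫) (μ • (innerSL ℝ e)) x :=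
      ((innerSL ℝ e).hasFDerivAt).const_mul μ
    have := (Real.hasDerivAt_exp (μ * ⟪e, x⟫)).comp_hasFDerivAt x h1
    refine this.congr_fderiv ?_
    rw [smul_smul]
  refine ⟨fun x => N - A * g x, ?_, ?_, ?_, ?_⟩
  · rw [hgdef]
    exact contDiff_const.sub (contDiff_const.mul (Real.contDiff_exp.comp
      (contDiff_const.mul (innerSL ℝ e).contDiff)))
  · intro x hx
    have h1 := (hgΩ x hx).2
    have h2 : A * g x ≤ A * Real.exp (μ*R) := by nlinarith [hA0]
    show (1:ℝ) ≤ N - A * g x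
    rw [hN]; linarith
  · -- continuous estimate
    intro a ha x hx
    have hD1 : ∀ (lj : V d) (y : V d),
        dirD lj (fun x => N - A * g x) y = -(A*μ) * g y * ⟪e, lj⟫ := by
      intro lj y
      have hΨd : HasFDerivAt (fun x : V d => N - A * g x)
          ((0 : V d →L[ℝ] ℝ) - A • ((g y * μ) • (innerSL ℝ e))) y :=
        (hasFDerivAt_const N y).sub ((hfd y).const_mul A)
      rw [dirD, hΨd.fderiv]; simp; ring
    have hD2 : ∀ j, dirD2 (l j) (fun x => N - A * g x) x
        = -(A*μ^2) * g x * ⟪e, l j⟫^2 := by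
      intro j
      have hfun : dirD (l j) (fun x => N - A * g x)
          = fun y => (-(A*μ*⟪e, l j⟫)) * g y := by
        funext y; rw [hD1 (l j) y]; ring
      rw [dirD2, hfun]
      have hcd : HasFDerivAt (fun y => (-(A*μ*⟪e, l j⟫)) * g y)
          ((-(A*μ*⟪e, l j⟫)) • ((g x * μ) • (innerSL ℝ e))) x := (hfd x).const_mul _
      rw [dirD, hcd.fderiv]; simp; ring
    have hgx2 : 2 ≤ A * g x := (hgΩ x hx).1
    have hterm2 : ∀ j ∈ Finset.univ, a j * dirD2 (l j) (fun x => N - A * g x) x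
        ≤ δ * (-(A*μ^2) * g x) * ⟪e, l j⟫^2 := by
      intro j _
      rw [hD2 j]
      have h1 : δ ≤ a j := (ha j).1
      have hp : 0 ≤ (a j - δ) * ((A*μ^2*g x) * ⟪e, l j⟫^2) :=
        mul_nonneg (sub_nonneg.mpr h1)
          (mul_nonneg (mul_nonneg (mul_nonneg hA0.le (sq_nonneg μ)) (hg0 x).le) (sq_nonneg _))
      nlinarith [hp]
    have hsum2 : ∑ j, a j * dirD2 (l j) (fun x => N - A * g x) x
        ≤ δ * (-(A*μ^2) * g x) * κ := by
      calc ∑ j, a j * dirD2 (l j) (fun x => N - A * g x) x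
          ≤ ∑ j, δ * (-(A*μ^2) * g x) * ⟪e, l j⟫^2 := Finset.sum_le_sum hterm2
        _ = δ * (-(A*μ^2) * g x) * κ := by rw [hκdef, Finset.mul_sum]
    have hterm1 : ∀ j ∈ Finset.univ,
        |dirD (l j) (fun x => N - A * g x) x| ≤ A*μ*g x := by
      intro j _
      rw [hD1 (l j) x, abs_mul, abs_mul]
      have h1 : |(-(A*μ))| = A*μ := by rw [abs_neg, abs_of_pos (mul_pos hA0 hμ0)]
      have h2 : |g x| = g x := abs_of_pos (hg0 x)
      rw [h1, h2]
      nlinarith [hlam j, mul_pos (mul_pos hA0 hμ0) (hg0 x), abs_nonneg ⟪e, l j⟫]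
    have hsum1 : ∑ j, |dirD (l j) (fun x => N - A * g x) x| ≤ 2*(m:ℝ)*(A*μ*g x) := by
      calc ∑ j, |dirD (l j) (fun x => N - A * g x) x|
          ≤ ∑ _j : SIdx m, A*μ*g x := Finset.sum_le_sum hterm1
        _ = 2*(m:ℝ)*(A*μ*g x) := by
            rw [Finset.sum_const, Finset.card_univ, Fintype.card_sum, Fintype.card_fin,
              nsmul_eq_mul]
            push_cast; ring
    have hc : 2 ≤ A*μ*g x := by nlinarith [hgx2, hg0 x, hA0, hμ1]
    have hcnn : 0 < A*μ*g x := by positivity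
    have hbig : δ * (-(A*μ^2) * g x) * κ + δ⁻¹ * (2*(m:ℝ)*(A*μ*g x)) ≤ -2 := by
      have key : δ * (-(A*μ^2) * g x) * κ = -(δ*μ*κ) * (A*μ*g x) := by ring
      rw [key, ← hμκ]
      have hY : 0 ≤ δ*κ*(A*μ*g x) := by positivity
      have hX : 0 ≤ (m:ℝ)*δ⁻¹*(A*μ*g x) := by positivity
      nlinarith [hY, hX, hc]
    have hmul := mul_le_mul_of_nonneg_left hsum1 hδi0.le
    linarith [hsum2, hmul]
  · -- finite-difference estimate
    refine ⟨Real.log 2 / μ, div_pos (Real.log_pos (by norm_num)) hμ0, ?_⟩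
    rintro h ⟨hh0, hh1⟩ a ha x hx
    have hxΩ : x ∈ Ω := by
      rw [intH, Set.mem_setOf] at hx
      by_contra hc
      rw [infDist_zero_of_mem (show x ∈ Ωᶜ from hc)] at hx; linarith
    have hE : Real.exp (μ*h) ≤ 2 := by
      rw [← Real.exp_log (by norm_num : (0:ℝ) < 2)]
      apply Real.exp_le_exp.mpr
      rw [lt_div_iff₀ hμ0] at hh1; nlinarith [hh1]
    have hgshift : ∀ (t : ℝ) (lj : V d), g (x + t • lj) = g x * Real.exp (μ*t*⟪e,lj⟫) := by
      intro t lj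
      rw [hgdef]
      simp only
      rw [inner_add_right, real_inner_smul_right, ← Real.exp_add]
      congr 1; ring
    have hgx2 : 2 ≤ A * g x := (hgΩ x hxΩ).1
    have hfd_eq : ∀ j, fdiff h (l j) (fun x => N - A * g x) x
        = -A * g x * (Real.exp (μ*h*⟪e, l j⟫) - 1) / h := by
      intro j
      have hr : fdiff h (l j) (fun x => N - A * g x) x
          = ((N - A * g (x + h • (l j))) - (N - A * g x)) / h := rfl
      rw [hr, hgshift]; ring
    have hsd_eq : ∀ j, sdiff h (l j) (fun x => N - A * g x) x
        = -A * g x * (Real.exp (μ*h*⟪e, l j⟫) - 2 + Real.exp (-(μ*h*⟪e, l j⟫))) / h^2 := by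
      intro j
      have hx2 : x - h • (l j) = x + (-h) • (l j) := by
        rw [neg_smul, ← sub_eq_add_neg]
      have hr : sdiff h (l j) (fun x => N - A * g x) x
          = ((N - A * g (x + h • (l j))) - 2*(N - A * g x) + (N - A * g (x - h • (l j)))) / h^2 := rfl
      rw [hr, hx2, hgshift, hgshift]
      have h3 : μ*(-h)*⟪e, l j⟫ = -(μ*h*⟪e, l j⟫) := by ring
      rw [h3]; ring
    have hterm2 : ∀ j ∈ Finset.univ, a j * sdiff h (l j) (fun x => N - A * g x) x
        ≤ δ * (-(A*μ^2) * g x) * ⟪e, l j⟫^2 := by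
      intro j _
      have hk := key_sq (μ*h*⟪e, l j⟫)
      have hsle : sdiff h (l j) (fun x => N - A * g x) x
          ≤ -(A*μ^2) * g x * ⟪e, l j⟫^2 := by
        rw [hsd_eq j, div_le_iff₀ (by positivity : (0:ℝ) < h^2)]
        nlinarith [mul_pos hA0 (hg0 x), hk, sq_nonneg (μ*h*⟪e, l j⟫)]
      have h1 : δ ≤ a j := (ha j).1
      have hp : 0 ≤ (a j - δ) * ((A*μ^2*g x) * ⟪e, l j⟫^2) :=
        mul_nonneg (sub_nonneg.mpr h1)
          (mul_nonneg (mul_nonneg (mul_nonneg hA0.le (sq_nonneg μ)) (hg0 x).le) (sq_nonneg _))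
      have hp2 : 0 ≤ (a j - δ) * (-(A*μ^2) * g x * ⟪e, l j⟫^2 - sdiff h (l j) (fun x => N - A * g x) x) :=
        mul_nonneg (sub_nonneg.mpr h1) (by linarith [hsle])
      nlinarith [hp, hp2]
    have hsum2 : ∑ j, a j * sdiff h (l j) (fun x => N - A * g x) x
        ≤ δ * (-(A*μ^2) * g x) * κ := by
      calc ∑ j, a j * sdiff h (l j) (fun x => N - A * g x) x
          ≤ ∑ j, δ * (-(A*μ^2) * g x) * ⟪e, l j⟫^2 := Finset.sum_le_sum hterm2
        _ = δ * (-(A*μ^2) * g x) * κ := by rw [hκdef, Finset.mul_sum]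
    have hterm1 : ∀ j ∈ Finset.univ, |fdiff h (l j) (fun x => N - A * g x) x|
        ≤ 2*(A*μ*g x) := by
      intro j _
      have hs1 : |μ*h*⟪e, l j⟫| ≤ μ*h := by
        rw [abs_mul, abs_mul, abs_of_pos hμ0, abs_of_pos hh0]
        nlinarith [hlam j, mul_pos hμ0 hh0]
      have hs2 : Real.exp (|μ*h*⟪e, l j⟫|) ≤ 2 := (Real.exp_le_exp.mpr hs1).trans hE
      have hs3 : |Real.exp (μ*h*⟪e, l j⟫) - 1| ≤ μ*h*2 := by
        refine (key_abs (μ*h*⟪e, l j⟫)).trans ?_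
        nlinarith [abs_nonneg (μ*h*⟪e, l j⟫), Real.exp_pos (|μ*h*⟪e, l j⟫|), hs1, hs2,
          mul_pos hμ0 hh0]
      rw [hfd_eq j, abs_div, abs_of_pos hh0, div_le_iff₀ hh0, abs_mul]
      have h1 : |(-A * g x)| = A * g x := by
        rw [abs_of_neg (by nlinarith [mul_pos hA0 (hg0 x)] : -A * g x < 0)]; ring
      rw [h1]
      nlinarith [hs3, mul_pos hA0 (hg0 x), mul_pos hμ0 hh0]
    have hsum1 : ∑ j, |fdiff h (l j) (fun x => N - A * g x) x|
        ≤ 2*(m:ℝ)*(2*(A*μ*g x)) := by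
      calc ∑ j, |fdiff h (l j) (fun x => N - A * g x) x|
          ≤ ∑ _j : SIdx m, 2*(A*μ*g x) := Finset.sum_le_sum hterm1
        _ = 2*(m:ℝ)*(2*(A*μ*g x)) := by
            rw [Finset.sum_const, Finset.card_univ, Fintype.card_sum, Fintype.card_fin,
              nsmul_eq_mul]
            push_cast; ring
    have hc : 2 ≤ A*μ*g x := by nlinarith [hgx2, hg0 x, hA0, hμ1]
    have hcnn : 0 < A*μ*g x := by positivity
    have hbig : δ * (-(A*μ^2) * g x) * κ + δ⁻¹ * (2*(m:ℝ)*(2*(A*μ*g x))) ≤ -1 := by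
      have key : δ * (-(A*μ^2) * g x) * κ = -(δ*μ*κ) * (A*μ*g x) := by ring
      rw [key, ← hμκ]
      have hY : 0 ≤ δ*κ*(A*μ*g x) := by positivity
      linarith [hY, hc]
    have hmul := mul_le_mul_of_nonneg_left hsum1 hδi0.le
    linarith [hsum2, hmul]
end
end

section
/- Let F : ℝⁿ → ℝ be Lipschitz continuous and let A ⊂ ℝⁿ be a convex, closed, bounded set. Assume there is a set D ⊂ ℝⁿ of full Lebesgue measure such that at every point u ∈ D the function F is differentiable and its gradient DF(u) belongs to A. Then for any u, v ∈ ℝⁿ there exists a ∈ A such that F(u) − F(v) = Σ_i a^i(u^i − v^i); in particular, min_{a∈A} Σ_i a^i(u^i − v^i) ≤ F(u) − F(v) ≤ max_{a∈A} Σ_i a^i(u^i − v^i). -/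
open scoped BigOperators NNReal
open MeasureTheory Metric Set

noncomputable section

open Filter intervalIntegral
open scoped ENNReal


lemma stmt18_deriv_le_of_lipschitz {g : ℝ → ℝ} {C : ℝ≥0} (hg : LipschitzWith C g) {t d : ℝ}
    (h : HasDerivAt g d t) : |d| ≤ C := by
  have hs : Tendsto (slope g t) (nhdsWithin t {t}ᶜ) (nhds d) :=
    hasDerivAt_iff_tendsto_slope.mp h
  have hb : ∀ u ∈ ({t}ᶜ : Set ℝ), |slope g t u| ≤ (C : ℝ) := by
    intro u hu
    rw [slope_def_field, div_eq_mul_inv, abs_mul, abs_inv]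
    rcases eq_or_ne u t with rfl | hne
    · simp
    · have : |g u - g t| ≤ (C : ℝ) * |u - t| := by
        have := hg.dist_le_mul u t
        simpa [Real.dist_eq] using this
      have hlt : 0 < |u - t| := abs_pos.mpr (sub_ne_zero.mpr hne)
      rw [mul_inv_le_iff₀ hlt] at *
      linarith
  have : Tendsto (fun u => |slope g t u|) (nhdsWithin t {t}ᶜ) (nhds |d|) :=
    hs.abs
  exact le_of_tendsto this (eventually_nhdsWithin_of_forall hb)

lemma stmt18_sub_le {g : ℝ → ℝ} {C : ℝ≥0} (hg : LipschitzWith C g)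
    {M : ℝ} (h : ∀ᵐ t : ℝ, DifferentiableAt ℝ g t ∧ deriv g t ≤ M) :
    g 1 - g 0 ≤ M := by
  have hgc : Continuous g := hg.continuous
  set hk : ℕ → ℝ := fun k => ((k : ℝ) + 1)⁻¹ with hhk
  have hkpos : ∀ k, 0 < hk k := fun k => by positivity
  have hk0 : Tendsto hk atTop (nhds 0) := tendsto_one_div_add_atTop_nhds_zero_nat.congr (by
    intro k; simp [hhk, one_div])
  -- quotient functions
  set Q : ℕ → ℝ → ℝ := fun k t => (g (t + hk k) - g t) / hk k with hQ
  -- Step 1: interval integral of Q k equals boundary integrals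
  have hint : ∀ (a b : ℝ), IntervalIntegrable g volume a b := fun a b =>
    hgc.intervalIntegrable a b
  have key : ∀ k, ∫ t in (0:ℝ)..1, Q k t =
      ((∫ t in (1:ℝ)..(1 + hk k), g t) - ∫ t in (0:ℝ)..(hk k), g t) / hk k := by
    intro k
    rw [intervalIntegral.integral_div]
    congr 1
    have h1 : ∫ t in (0:ℝ)..1, (g (t + hk k) - g t) =
        (∫ t in (0:ℝ)..1, g (t + hk k)) - ∫ t in (0:ℝ)..1, g t :=
      integral_sub ((hgc.comp (by continuity)).intervalIntegrable _ _) (hint 0 1)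
    rw [h1, integral_comp_add_right, zero_add]
    have h2 : (∫ t in (hk k)..(1:ℝ), g t) + ∫ t in (1:ℝ)..(1 + hk k), g t
        = ∫ t in (hk k)..(1 + hk k), g t := integral_add_adjacent_intervals (hint _ _) (hint _ _)
    have h3 : (∫ t in (0:ℝ)..(hk k), g t) + ∫ t in (hk k)..(1:ℝ), g t
        = ∫ t in (0:ℝ)..(1:ℝ), g t := integral_add_adjacent_intervals (hint _ _) (hint _ _)
    linarith
  -- Step 2: limit of boundary integrals is g 1 - g 0
  have bnd : Tendsto (fun k => ∫ t in (0:ℝ)..1, Q k t) atTop (nhds (g 1 - g 0)) := by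
    have hD1 : HasDerivAt (fun u => ∫ t in (1:ℝ)..u, g t) (g 1) 1 :=
      integral_hasDerivAt_right (hint _ _) (hgc.stronglyMeasurableAtFilter _ _)
        hgc.continuousAt
    have hD0 : HasDerivAt (fun u => ∫ t in (0:ℝ)..u, g t) (g 0) 0 :=
      integral_hasDerivAt_right (hint _ _) (hgc.stronglyMeasurableAtFilter _ _)
        hgc.continuousAt
    have hs1 := hasDerivAt_iff_tendsto_slope.mp hD1
    have hs0 := hasDerivAt_iff_tendsto_slope.mp hD0
    have ht1 : Tendsto (fun k => 1 + hk k) atTop (nhdsWithin 1 ({1}ᶜ : Set ℝ)) := by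
      apply tendsto_nhdsWithin_of_tendsto_nhds_of_eventually_within
      · simpa using ((tendsto_const_nhds (x := (1:ℝ))).add hk0)
      · filter_upwards with k; simp [(hkpos k).ne']
    have ht0 : Tendsto (fun k => 0 + hk k) atTop (nhdsWithin 0 ({0}ᶜ : Set ℝ)) := by
      apply tendsto_nhdsWithin_of_tendsto_nhds_of_eventually_within
      · simpa using ((tendsto_const_nhds (x := (0:ℝ))).add hk0)
      · filter_upwards with k; simp [(hkpos k).ne']
    have c1 := hs1.comp ht1
    have c0 := hs0.comp ht0
    have : Tendsto (fun k => slope (fun u => ∫ t in (1:ℝ)..u, g t) 1 (1 + hk k)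
        - slope (fun u => ∫ t in (0:ℝ)..u, g t) 0 (0 + hk k)) atTop (nhds (g 1 - g 0)) :=
      c1.sub c0
    apply this.congr
    intro k
    rw [key k]
    rw [slope_def_field, slope_def_field]
    simp only [integral_same]  -- ∫ 1..1 = 0, ∫ 0..0 = 0
    field_simp
    simp only [sub_zero, zero_add, add_sub_cancel_left]
    ring
  -- Step 3: dominated convergence
  have hQc : ∀ k, Continuous (Q k) := by
    intro k
    exact ((hgc.comp (continuous_id.add continuous_const)).sub hgc).div_const _
  have hboundInt : Integrable (fun _ : ℝ => (C : ℝ)) (volume.restrict (Ioc (0:ℝ) 1)) :=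
    integrableOn_const measure_Ioc_lt_top.ne
  have hQb : ∀ k, ∀ᵐ t ∂(volume.restrict (Ioc (0:ℝ) 1)), ‖Q k t‖ ≤ (C : ℝ) := by
    intro k
    filter_upwards with t
    have hd : |g (t + hk k) - g t| ≤ (C : ℝ) * hk k := by
      have := hg.dist_le_mul (t + hk k) t
      simpa [Real.dist_eq, abs_of_pos (hkpos k)] using this
    have : ‖Q k t‖ = |g (t + hk k) - g t| / hk k := by
      simp [hQ, Real.norm_eq_abs, abs_div, abs_of_pos (hkpos k)]
    rw [this, div_le_iff₀ (hkpos k)]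
    linarith
  have hQlim : ∀ᵐ t ∂(volume.restrict (Ioc (0:ℝ) 1)),
      Tendsto (fun k => Q k t) atTop (nhds (deriv g t)) := by
    filter_upwards [ae_restrict_of_ae h] with t ht
    have hs := hasDerivAt_iff_tendsto_slope.mp ht.1.hasDerivAt
    have htk : Tendsto (fun k => t + hk k) atTop (nhdsWithin t ({t}ᶜ : Set ℝ)) := by
      apply tendsto_nhdsWithin_of_tendsto_nhds_of_eventually_within
      · simpa using ((tendsto_const_nhds (x := t)).add hk0)
      · filter_upwards with k; simp [(hkpos k).ne']
    have := hs.comp htk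
    apply this.congr
    intro k
    simp [slope_def_field, hQ]
  have hDCT : Tendsto (fun k => ∫ t in Ioc (0:ℝ) 1, Q k t) atTop
      (nhds (∫ t in Ioc (0:ℝ) 1, deriv g t)) :=
    tendsto_integral_of_dominated_convergence _ (fun k => ((hQc k).aestronglyMeasurable).restrict)
      hboundInt hQb hQlim
  have heq : ∀ k, ∫ t in Ioc (0:ℝ) 1, Q k t = ∫ t in (0:ℝ)..1, Q k t := fun k =>
    (intervalIntegral.integral_of_le zero_le_one).symm
  have hlim2 : Tendsto (fun k => ∫ t in (0:ℝ)..1, Q k t) atTop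
      (nhds (∫ t in Ioc (0:ℝ) 1, deriv g t)) := by
    apply hDCT.congr; intro k; exact heq k
  have huniq : g 1 - g 0 = ∫ t in Ioc (0:ℝ) 1, deriv g t :=
    tendsto_nhds_unique bnd hlim2
  rw [huniq]
  have hderInt : Integrable (deriv g) (volume.restrict (Ioc (0:ℝ) 1)) := by
    apply hboundInt.mono' ((measurable_deriv g).aestronglyMeasurable).restrict
    filter_upwards [ae_restrict_of_ae h] with t ht
    simpa using stmt18_deriv_le_of_lipschitz hg ht.1.hasDerivAt
  calc ∫ t in Ioc (0:ℝ) 1, deriv g t ≤ ∫ _t in Ioc (0:ℝ) 1, M := by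
        apply MeasureTheory.integral_mono_ae hderInt
          (integrableOn_const measure_Ioc_lt_top.ne)
        filter_upwards [ae_restrict_of_ae h] with t ht using ht.2
    _ = M := by simp


lemma euclid_decomp {n : ℕ} (w : EuclideanSpace ℝ (Fin n)) :
    w = ∑ i, w i • EuclideanSpace.single i (1:ℝ) := by
  ext j
  have : (∑ i, w i • EuclideanSpace.single i (1:ℝ)) j
      = ∑ i, (w i • EuclideanSpace.single i (1:ℝ)) j :=
    by rw [WithLp.ofLp_sum]; exact Finset.sum_apply j Finset.univ _
  rw [this]
  simp [EuclideanSpace.single_apply]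

lemma fderiv_apply_eq_sum {n : ℕ} (F : EuclideanSpace ℝ (Fin n) → ℝ)
    (y w : EuclideanSpace ℝ (Fin n)) :
    fderiv ℝ F y w = ∑ i, (fderiv ℝ F y (EuclideanSpace.single i 1)) * w i := by
  conv_lhs => rw [euclid_decomp w]
  rw [map_sum]
  congr 1; ext i
  rw [_root_.map_smul]
  simp [mul_comm]

lemma fubini_lines {n : ℕ} (N : Set (EuclideanSpace ℝ (Fin n))) (hN : MeasurableSet N)
    (h0 : volume N = 0) (w : EuclideanSpace ℝ (Fin n)) :
    ∀ᵐ x : EuclideanSpace ℝ (Fin n), ∀ᵐ t : ℝ, x + t • w ∉ N := by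
  have hmap : Measurable fun p : EuclideanSpace ℝ (Fin n) × ℝ => p.1 + p.2 • w := by
    fun_prop
  set s : Set (EuclideanSpace ℝ (Fin n) × ℝ) := {p | p.1 + p.2 • w ∈ N} with hs
  have hsm : MeasurableSet s := hmap hN
  have hz : (volume.prod volume) s = 0 := by
    rw [Measure.prod_apply_symm hsm]
    have : ∀ t : ℝ, volume ((fun x : EuclideanSpace ℝ (Fin n) => (x, t)) ⁻¹' s) = 0 := by
      intro t
      have he : ((fun x : EuclideanSpace ℝ (Fin n) => (x, t)) ⁻¹' s)
          = (fun x : EuclideanSpace ℝ (Fin n) => x + t • w) ⁻¹' N := rfl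
      rw [he, measure_preimage_add_right volume (t • w) N]
      exact h0
    simp [this]
  exact Measure.ae_ae_of_ae_prod (measure_eq_zero_iff_ae_notMem.mp hz)



/-- **Lemma 9.1.** If `F : ℝⁿ → ℝ` is Lipschitz and its gradient lies in a convex closed
bounded set `A` on a set of full measure, then every difference `F(u) - F(v)` is realized
by some `a ∈ A`; in particular it lies between the min and the max of `⟨a, u - v⟩` over `A`. -/
theorem stmt_18 (n : ℕ) (F : EuclideanSpace ℝ (Fin n) → ℝ)
    (hFLip : ∃ C : ℝ≥0, LipschitzWith C F)
    (A : Set (EuclideanSpace ℝ (Fin n))) (hAconv : Convex ℝ A) (hAcl : IsClosed A)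
    (hAbd : Bornology.IsBounded A)
    (D : Set (EuclideanSpace ℝ (Fin n))) (hD : volume Dᶜ = 0)
    (hgrad : ∀ u ∈ D, DifferentiableAt ℝ F u ∧
      toE (fun i => fderiv ℝ F u (EuclideanSpace.single i 1)) ∈ A) :
    ∀ u v : EuclideanSpace ℝ (Fin n),
      (∃ a ∈ A, F u - F v = ∑ i, a i * (u i - v i)) ∧
      sInf {t | ∃ a ∈ A, t = ∑ i, a i * (u i - v i)} ≤ F u - F v ∧
      F u - F v ≤ sSup {t | ∃ a ∈ A, t = ∑ i, a i * (u i - v i)} := by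
  obtain ⟨C, hC⟩ := hFLip
  obtain ⟨N, hDN, hNm, hN0⟩ := exists_measurable_superset_of_null hD
  have hDN' : ∀ x, x ∉ N → x ∈ D := fun x hx => by
    by_contra hxd; exact hx (hDN hxd)
  -- A nonempty
  have hA_ne : A.Nonempty := by
    by_cases hDe : D.Nonempty
    · obtain ⟨x₀, hx₀⟩ := hDe; exact ⟨_, (hgrad x₀ hx₀).2⟩
    · exfalso
      rw [not_nonempty_iff_eq_empty] at hDe
      rw [hDe, compl_empty] at hD
      have h1 : (0:ℝ≥0∞) < volume (univ : Set (EuclideanSpace ℝ (Fin n))) :=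
        isOpen_univ.measure_pos volume univ_nonempty
      rw [hD] at h1; exact lt_irrefl _ h1
  have hAcomp : IsCompact A := Metric.isCompact_of_isClosed_isBounded hAcl hAbd
  -- the key inequality
  have key : ∀ (x₀ w : EuclideanSpace ℝ (Fin n)),
      F (x₀ + w) - F x₀ ≤ sSup ((fun a : EuclideanSpace ℝ (Fin n) => ∑ i, a i * w i) '' A) := by
    intro x₀ w
    set φ : EuclideanSpace ℝ (Fin n) → ℝ := fun a => ∑ i, a i * w i with hφ
    have hφc : Continuous φ := by
      apply continuous_finset_sum
      intro i _
      exact ((EuclideanSpace.proj i).continuous.mul continuous_const)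
    have hTbdd : BddAbove (φ '' A) := (hAcomp.image hφc).bddAbove
    set G := {x : EuclideanSpace ℝ (Fin n) | ∀ᵐ t : ℝ, x + t • w ∉ N} with hG
    have hGineq : ∀ x ∈ G, F (x + w) - F x ≤ sSup (φ '' A) := by
      intro x hx
      set g : ℝ → ℝ := fun t => F (x + t • w) with hgdef
      have hlin : LipschitzWith ‖w‖₊ (fun t : ℝ => x + t • w) := by
        apply LipschitzWith.of_dist_le_mul
        intro s t
        rw [dist_eq_norm, Real.dist_eq]
        have he : (x + s • w) - (x + t • w) = (s - t) • w := by
          rw [add_sub_add_left_eq_sub, ← sub_smul]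
        rw [he, norm_smul]
        simp [Real.norm_eq_abs, mul_comm]
      have hgLip : LipschitzWith (C * ‖w‖₊) g := hC.comp hlin
      have hae : ∀ᵐ t : ℝ, DifferentiableAt ℝ g t ∧ deriv g t ≤ sSup (φ '' A) := by
        filter_upwards [hx] with t ht
        have hmem := hDN' _ ht
        obtain ⟨hdiff, hgradmem⟩ := hgrad _ hmem
        have hline : HasDerivAt (fun t : ℝ => x + t • w) w t := by
          simpa using ((hasDerivAt_id t).smul_const w).const_add x
        have hgd : HasDerivAt g (fderiv ℝ F (x + t • w) w) t :=
          (hdiff.hasFDerivAt).comp_hasDerivAt t hline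
        refine ⟨hgd.differentiableAt, ?_⟩
        rw [hgd.deriv, fderiv_apply_eq_sum]
        exact le_csSup hTbdd ⟨_, hgradmem, by simp [hφ, toE]⟩
      have := stmt18_sub_le hgLip hae
      simpa [hgdef] using this
    have hGc : volume Gᶜ = 0 := by
      have hfull := fubini_lines N hNm hN0 w
      exact hfull
    have hGdense : Dense G := by
      intro x
      rw [_root_.mem_closure_iff]
      intro o ho hxo
      by_contra hcon
      rw [not_nonempty_iff_eq_empty] at hcon
      have hsub : o ⊆ Gᶜ := fun y hy => fun hyG => by
        have : y ∈ o ∩ G := ⟨hy, hyG⟩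
        rw [hcon] at this; exact this
      have : volume o = 0 := measure_mono_null hsub hGc
      have hpos : 0 < volume o := ho.measure_pos volume ⟨x, hxo⟩
      rw [this] at hpos; exact lt_irrefl _ hpos
    have hclosed : IsClosed {x : EuclideanSpace ℝ (Fin n) | F (x + w) - F x ≤ sSup (φ '' A)} := by
      apply isClosed_le _ continuous_const
      exact (hC.continuous.comp (continuous_id.add continuous_const)).sub hC.continuous
    have hsub : closure G ⊆ {x | F (x + w) - F x ≤ sSup (φ '' A)} :=
      closure_minimal hGineq hclosed
    exact hsub (by rw [hGdense.closure_eq]; trivial)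
  -- assembly
  intro u v
  set L : EuclideanSpace ℝ (Fin n) → ℝ := fun a => ∑ i, a i * (u i - v i) with hL
  set T := {t : ℝ | ∃ a ∈ A, t = ∑ i, a i * (u i - v i)} with hT
  have hTL : T = L '' A := by
    ext t; constructor
    · rintro ⟨a, ha, rfl⟩; exact ⟨a, ha, rfl⟩
    · rintro ⟨a, ha, rfl⟩; exact ⟨a, ha, rfl⟩
  have hLc : Continuous L := by
    apply continuous_finset_sum
    intro i _
    exact ((EuclideanSpace.proj i).continuous.mul continuous_const)
  have hTcomp : IsCompact T := hTL ▸ hAcomp.image hLc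
  have hTne : T.Nonempty := hTL ▸ hA_ne.image L
  -- upper bound
  have hupper : F u - F v ≤ sSup T := by
    have h1 := key v (u - v)
    have h2 : v + (u - v) = u := by abel
    rw [h2] at h1
    have h3 : (fun a : EuclideanSpace ℝ (Fin n) => ∑ i, a i * (u - v) i) = L := by
      funext a
      exact Finset.sum_congr rfl fun i _ => by rw [PiLp.sub_apply]
    rw [h3, ← hTL] at h1
    exact h1
  -- lower bound
  have hlower : sInf T ≤ F u - F v := by
    have h1 := key u (v - u)
    have h2 : u + (v - u) = v := by abel
    rw [h2] at h1
    have h3 : (fun a : EuclideanSpace ℝ (Fin n) => ∑ i, a i * (v - u) i) '' A = -T := by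
      have hfe : (fun a : EuclideanSpace ℝ (Fin n) => ∑ i, a i * (v - u) i)
          = fun a => -(L a) := by
        funext a
        rw [hL]; simp only
        rw [← Finset.sum_neg_distrib]
        exact Finset.sum_congr rfl fun i _ => by rw [PiLp.sub_apply]; ring
      rw [hfe]
      rw [show (fun a : EuclideanSpace ℝ (Fin n) => -(L a)) = Neg.neg ∘ L from rfl]
      rw [Set.image_comp, ← hTL, Set.image_neg_eq_neg]
    rw [h3] at h1
    have h4 : sInf T = -sSup (-T) := Real.sInf_def T
    linarith
  refine ⟨?_, hlower, hupper⟩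
  -- existence
  have hTconv : Convex ℝ T := by
    rw [hTL]
    apply hAconv.is_linear_image
    constructor
    · intro a b
      rw [hL]; simp only
      rw [← Finset.sum_add_distrib]
      congr 1; ext i
      simp [PiLp.add_apply]; ring
    · intro c a
      rw [hL]; simp only
      rw [Finset.smul_sum]
      congr 1; ext i
      simp [PiLp.smul_apply]; ring
  have hmemT : F u - F v ∈ T := by
    have h5 : sInf T ∈ T := hTcomp.sInf_mem hTne
    have h6 : sSup T ∈ T := hTcomp.sSup_mem hTne
    exact hTconv.ordConnected.out h5 h6 ⟨hlower, hupper⟩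
  obtain ⟨a, ha, hae⟩ := hmemT
  exact ⟨a, ha, hae⟩
end
end
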